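/- (Upper bound on the estimating sequence.) Let f: ℝ^d → ℝ be convex and differentiable, let t ≥ 1 be an integer, let x₀, x* ∈ ℝ^d, let x_1,…,x_t ∈ ℝ^d and g_1,…,g_t ∈ ℝ^d, and let λ, κ₂, κ₃ ≥ 0. Set α_j = 3/(j+3) for j ≥ 0 (so α_0 = 1), A_0 = 1 and A_j = Π_{k=1}^j (1 − α_k) for j ≥ 1, and define ψ_t(x) = ((κ₂ + λ)/2)‖x − x₀‖² + (κ₃/3)‖x − x₀‖³ + Σ_{j=0}^{t−1} (α_j/A_j)·(f(x_{j+1}) + ⟨g_{j+1}, x − x_{j+1}⟩). Then ψ_t(x*) ≤ f(x*)/A_{t−1} + ((κ₂ + λ)/2)‖x* − x₀‖² + (κ₃/3)‖x* − x₀‖³ + Σ_{j=0}^{t−1} (α_j/A_j)·⟨g_{j+1} − ∇f(x_{j+1}), x* − x_{j+1}⟩. -/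

import Mathlib

open scoped RealInnerProductSpace
open Finset

/-- `α_j = 3/(j+3)`. -/
noncomputable def accAlpha (j : ℕ) : ℝ := 3 / ((j : ℝ) + 3)

/-- `A_0 = 1`, `A_j = Π_{k=1}^j (1 - α_k)`. -/
noncomputable def accA (j : ℕ) : ℝ := ∏ k ∈ Finset.Icc 1 j, (1 - accAlpha k)

lemma one_sub_accAlpha_pos (k : ℕ) (hk : 1 ≤ k) : 0 < 1 - accAlpha k := by
  have : (0:ℝ) < (k:ℝ) + 3 := by positivity
  have hk1 : (1:ℝ) ≤ (k:ℝ) := by exact_mod_cast hk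
  unfold accAlpha
  rw [sub_pos, div_lt_one this]
  linarith

lemma accA_pos (j : ℕ) : 0 < accA j := by
  refine Finset.prod_pos fun k hk => ?_
  rw [Finset.mem_Icc] at hk
  exact one_sub_accAlpha_pos k hk.1

lemma accAlpha_nonneg (j : ℕ) : 0 ≤ accAlpha j := by
  unfold accAlpha; positivity

lemma accA_succ (j : ℕ) : accA (j + 1) = accA j * (1 - accAlpha (j + 1)) := by
  unfold accA
  rw [Finset.prod_Icc_succ_top (Nat.le_add_left 1 j)]

lemma sum_ratio (t : ℕ) (ht : 1 ≤ t) :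
    ∑ j ∈ Finset.range t, accAlpha j / accA j = 1 / accA (t - 1) := by
  induction t with
  | zero => omega
  | succ n ih =>
    rcases Nat.eq_or_lt_of_le ht with h | h
    · simp [← h, accA, accAlpha]
    · have hn : 1 ≤ n := by omega
      rw [Finset.sum_range_succ, ih hn, Nat.add_sub_cancel]
      have hA : accA n = accA (n-1) * (1 - accAlpha n) := by
        conv_lhs => rw [show n = (n-1)+1 by omega, accA_succ, show (n-1)+1 = n by omega]
      have h1 := accA_pos (n-1)
      have h2 := accA_pos n
      have h3 : 0 < 1 - accAlpha n := one_sub_accAlpha_pos n hn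
      rw [hA]
      field_simp
      ring

lemma first_order {d : ℕ} {f : EuclideanSpace ℝ (Fin d) → ℝ}
    (hconv : ConvexOn ℝ Set.univ f) (hdiff : Differentiable ℝ f)
    (a b : EuclideanSpace ℝ (Fin d)) :
    f a + ⟪gradient f a, b - a⟫ ≤ f b := by
  set G : ℝ → ℝ := fun s => f (s • (b - a) + a) with hG
  have hderiv : HasDerivAt G (fderiv ℝ f a (b - a)) 0 := by
    have hc : HasDerivAt (fun s : ℝ => s • (b - a) + a) (b - a) 0 := by
      simpa using ((hasDerivAt_id (0:ℝ)).smul_const (b - a)).add_const a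
    have hf : HasFDerivAt f (fderiv ℝ f a) ((0:ℝ) • (b - a) + a) := by
      simpa using (hdiff a).hasFDerivAt
    exact hf.comp_hasDerivAt 0 hc
  have hconvG : ConvexOn ℝ Set.univ G := by
    have := hconv.comp_affineMap (AffineMap.lineMap a b : ℝ →ᵃ[ℝ] EuclideanSpace ℝ (Fin d))
    simp only [Set.preimage_univ] at this
    exact this
  have hs := hconvG.le_slope_of_hasDerivAt (Set.mem_univ 0) (Set.mem_univ 1) one_pos hderiv
  rw [slope_def_field] at hs
  have h0 : G 0 = f a := by simp [hG]
  have h1 : G 1 = f b := by simp [hG]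
  have hgrad : fderiv ℝ f a (b - a) = ⟪gradient f a, b - a⟫ := by
    rw [gradient]
    rw [← InnerProductSpace.toDual_apply_apply]
    simp
  rw [h0, h1, hgrad] at hs
  linarith [hs]

/-- Upper bound on the estimating sequence. -/
theorem estimating_sequence_upper_bound
    (d : ℕ) (f : EuclideanSpace ℝ (Fin d) → ℝ)
    (hconv : ConvexOn ℝ Set.univ f) (hdiff : Differentiable ℝ f)
    (t : ℕ) (ht : 1 ≤ t)
    (x₀ xs : EuclideanSpace ℝ (Fin d))
    (x g : ℕ → EuclideanSpace ℝ (Fin d))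
    (lam κ₂ κ₃ : ℝ) (hlam : 0 ≤ lam) (hκ₂ : 0 ≤ κ₂) (hκ₃ : 0 ≤ κ₃) :
    ((κ₂ + lam) / 2) * ‖xs - x₀‖ ^ 2 + (κ₃ / 3) * ‖xs - x₀‖ ^ 3
        + ∑ j ∈ Finset.range t,
            (accAlpha j / accA j) * (f (x (j + 1)) + ⟪g (j + 1), xs - x (j + 1)⟫)
      ≤ f xs / accA (t - 1)
        + ((κ₂ + lam) / 2) * ‖xs - x₀‖ ^ 2 + (κ₃ / 3) * ‖xs - x₀‖ ^ 3
        + ∑ j ∈ Finset.range t,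
            (accAlpha j / accA j) * ⟪g (j + 1) - gradient f (x (j + 1)), xs - x (j + 1)⟫ := by
  have key : ∀ j : ℕ,
      (accAlpha j / accA j) * (f (x (j + 1)) + ⟪g (j + 1), xs - x (j + 1)⟫)
        ≤ (accAlpha j / accA j) * f xs
          + (accAlpha j / accA j) * ⟪g (j + 1) - gradient f (x (j + 1)), xs - x (j + 1)⟫ := by
    intro j
    have h1 := first_order hconv hdiff (x (j + 1)) xs
    have hnn : 0 ≤ accAlpha j / accA j :=
      div_nonneg (accAlpha_nonneg j) (accA_pos j).le
    have hinner : ⟪g (j + 1), xs - x (j + 1)⟫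
        = ⟪g (j + 1) - gradient f (x (j + 1)), xs - x (j + 1)⟫
          + ⟪gradient f (x (j + 1)), xs - x (j + 1)⟫ := by
      rw [← inner_add_left]; simp
    calc (accAlpha j / accA j) * (f (x (j + 1)) + ⟪g (j + 1), xs - x (j + 1)⟫)
        = (accAlpha j / accA j) * (f (x (j + 1)) + ⟪gradient f (x (j + 1)), xs - x (j + 1)⟫)
            + (accAlpha j / accA j) * ⟪g (j + 1) - gradient f (x (j + 1)), xs - x (j + 1)⟫ := by
          rw [hinner]; ring
      _ ≤ (accAlpha j / accA j) * f xs
            + (accAlpha j / accA j) * ⟪g (j + 1) - gradient f (x (j + 1)), xs - x (j + 1)⟫ :=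
          add_le_add_left (mul_le_mul_of_nonneg_left h1 hnn) _
  have hsum : ∑ j ∈ Finset.range t,
      (accAlpha j / accA j) * (f (x (j + 1)) + ⟪g (j + 1), xs - x (j + 1)⟫)
      ≤ f xs / accA (t - 1)
        + ∑ j ∈ Finset.range t,
            (accAlpha j / accA j) * ⟪g (j + 1) - gradient f (x (j + 1)), xs - x (j + 1)⟫ := by
    calc ∑ j ∈ Finset.range t,
        (accAlpha j / accA j) * (f (x (j + 1)) + ⟪g (j + 1), xs - x (j + 1)⟫)
        ≤ ∑ j ∈ Finset.range t,
            ((accAlpha j / accA j) * f xs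
              + (accAlpha j / accA j) * ⟪g (j + 1) - gradient f (x (j + 1)), xs - x (j + 1)⟫) :=
          Finset.sum_le_sum fun j _ => key j
      _ = (∑ j ∈ Finset.range t, accAlpha j / accA j) * f xs
            + ∑ j ∈ Finset.range t,
              (accAlpha j / accA j) * ⟪g (j + 1) - gradient f (x (j + 1)), xs - x (j + 1)⟫ := by
          rw [Finset.sum_add_distrib, ← Finset.sum_mul]
      _ = f xs / accA (t - 1)
            + ∑ j ∈ Finset.range t,
              (accAlpha j / accA j) * ⟪g (j + 1) - gradient f (x (j + 1)), xs - x (j + 1)⟫ := by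
          rw [sum_ratio t ht]; ring
  linarith [hsum]
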